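/- Let p be a real number with 0 < p < 1 and let d be a real number with d ≥ 2. Then the function f(x) = (p^{d-x} - p^d)/x is strictly increasing on the interval [1, d-1], where powers are real powers. -/

import Mathlib

theorem f_strict_mono (p d : ℝ) (hp0 : 0 < p) (hp1 : p < 1) (hd : 2 ≤ d) :
    StrictMonoOn (fun x : ℝ => (p ^ (d - x) - p ^ d) / x) (Set.Icc 1 (d - 1)) := by
  intro x hx y hy hxy
  have hlogp : Real.log p < 0 := Real.log_neg hp0 hp1
  set t : ℝ := -Real.log p with ht
  have ht0 : 0 < t := by simpa [ht] using neg_pos.mpr hlogp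
  have hx0 : 0 < x := lt_of_lt_of_le one_pos hx.1
  have hy0 : 0 < y := lt_of_lt_of_le one_pos hy.1
  -- rewrite p^(d-x) - p^d = p^d * (exp (t*x) - 1)
  have key : ∀ z : ℝ, p ^ (d - z) - p ^ d = p ^ d * (Real.exp (t * z) - 1) := by
    intro z
    have : p ^ (d - z) = p ^ d * Real.exp (t * z) := by
      rw [Real.rpow_def_of_pos hp0, Real.rpow_def_of_pos hp0, ← Real.exp_add]
      rw [ht]; ring_nf
    rw [this]; ring
  have hsec := strictConvexOn_exp.secant_strict_mono (a := 0) (x := t * x) (y := t * y)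
    (Set.mem_univ _) (Set.mem_univ _) (Set.mem_univ _)
    (mul_pos ht0 hx0).ne' (mul_pos ht0 hy0).ne'
    (by exact (mul_lt_mul_iff_right₀ ht0).mpr hxy)
  simp only [Real.exp_zero, sub_zero] at hsec
  have h1 : (Real.exp (t * x) - 1) / x < (Real.exp (t * y) - 1) / y := by
    have := (mul_lt_mul_iff_right₀ ht0).mpr hsec
    calc (Real.exp (t * x) - 1) / x = t * ((Real.exp (t * x) - 1) / (t * x)) := by
          field_simp
      _ < t * ((Real.exp (t * y) - 1) / (t * y)) := this
      _ = (Real.exp (t * y) - 1) / y := by field_simp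
  have hpd : (0:ℝ) < p ^ d := Real.rpow_pos_of_pos hp0 d
  simp only [key, mul_div_assoc]
  exact (mul_lt_mul_iff_right₀ hpd).mpr h1
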